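/- arXiv:2112.06472 — 3 statements merged into one kernel-verified Lean document; each statement's English description precedes it below -/
import Mathlib

section
/- For ν > -1/2 and μ ∈ ℝ, the integral ∫_{-1}^{1} e^{iμx}(1-x²)^{ν-1} dx equals √π · Γ(ν) · (2/μ)^{ν-1/2} · J_{ν-1/2}(μ), where J is the Bessel function of the first kind defined by its power series J_α(x) = Σ_{k≥0} (-1)^k / (k! Γ(α+k+1)) · (x/2)^{α+2k}. -/
open MeasureTheory Real Complex Finset
open scoped RealInnerProductSpace

noncomputable def besselJ (ν x : ℝ) : ℝ :=
  ∑' k : ℕ, (-1 : ℝ) ^ k / (k.factorial * Real.Gamma (ν + k + 1)) * (x / 2) ^ (ν + 2 * (k : ℝ))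

noncomputable def besselI (ν x : ℝ) : ℝ :=
  ∑' k : ℕ, (1 : ℝ) / (k.factorial * Real.Gamma (ν + k + 1)) * (x / 2) ^ (ν + 2 * (k : ℝ))

noncomputable def besselK (ν x : ℝ) : ℝ :=
  Real.pi * (besselI (-ν) x - besselI ν x) / (2 * Real.sin (ν * Real.pi))

noncomputable def poch (a : ℝ) (k : ℕ) : ℝ := ∏ i ∈ Finset.range k, (a + i)

noncomputable def hyp0F1 (c z : ℝ) : ℝ := ∑' k : ℕ, z ^ k / (poch c k * k.factorial)

noncomputable def hyp1F1 (a c z : ℝ) : ℝ :=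
  ∑' k : ℕ, poch a k / poch c k * z ^ k / k.factorial

noncomputable def sphereUniform (n : ℕ) : Measure (EuclideanSpace ℝ (Fin n)) :=
  (μH[(n : ℝ) - 1] (Metric.sphere (0 : EuclideanSpace ℝ (Fin n)) 1))⁻¹ •
    (μH[(n : ℝ) - 1]).restrict (Metric.sphere 0 1)


section PoissonAux
open intervalIntegral

lemma gamma_nat_add_half (k : ℕ) :
    Real.Gamma ((k : ℝ) + 1 / 2) = (2 * k).factorial * Real.sqrt π / (4 ^ k * k.factorial) := by
  induction k with
  | zero => norm_num [show ((0:ℕ):ℝ) + 1/2 = 1/2 by norm_num, Real.Gamma_one_half_eq]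
  | succ n ih =>
    have hne : ((n : ℝ) + 1 / 2) ≠ 0 := by positivity
    have : ((n : ℝ) + 1 + 1 / 2) = ((n : ℝ) + 1 / 2) + 1 := by ring
    rw [Nat.cast_add, Nat.cast_one, this, Real.Gamma_add_one hne, ih]
    have h1 : (2 * (n + 1)).factorial = (2 * n + 2) * ((2 * n + 1) * (2 * n).factorial) := by
      have : 2 * (n + 1) = (2 * n + 1) + 1 := by ring
      rw [this, Nat.factorial_succ, Nat.factorial_succ]
    have h2 : (n + 1).factorial = (n + 1) * n.factorial := Nat.factorial_succ n
    rw [h1, h2]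
    have hf : ((2 * n).factorial : ℝ) ≠ 0 := by positivity
    have hf2 : (n.factorial : ℝ) ≠ 0 := by positivity
    have h4 : (4 : ℝ) ^ n ≠ 0 := by positivity
    push_cast
    field_simp
    ring

lemma betaVal {a b : ℝ} (ha : 0 < a) (hb : 0 < b) :
    ∫ x in (0:ℝ)..1, x ^ (a - 1) * (1 - x) ^ (b - 1)
      = Real.Gamma a * Real.Gamma b / Real.Gamma (a + b) := by
  have key : Complex.betaIntegral a b
      = ((∫ x in (0:ℝ)..1, x ^ (a - 1) * (1 - x) ^ (b - 1) : ℝ) : ℂ) := by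
    rw [Complex.betaIntegral, ← intervalIntegral.integral_ofReal]
    apply intervalIntegral.integral_congr
    intro x hx
    rw [Set.uIcc_of_le (by norm_num)] at hx
    have hx0 : (0:ℝ) ≤ x := hx.1
    have hx1 : (0:ℝ) ≤ 1 - x := by linarith [hx.2]
    simp only [Complex.ofReal_mul, Complex.ofReal_cpow hx0, Complex.ofReal_cpow hx1]
    push_cast
    ring
  have hG := Complex.Gamma_mul_Gamma_eq_betaIntegral
    (s := (a:ℂ)) (t := (b:ℂ)) (by simpa using ha) (by simpa using hb)
  rw [key] at hG
  have hab : Real.Gamma (a + b) ≠ 0 := (Real.Gamma_pos_of_pos (by linarith)).ne'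
  have : ((Real.Gamma a * Real.Gamma b : ℝ) : ℂ)
      = ((Real.Gamma (a + b) * ∫ x in (0:ℝ)..1, x ^ (a - 1) * (1 - x) ^ (b - 1) : ℝ) : ℂ) := by
    push_cast
    rw [← Complex.Gamma_ofReal, ← Complex.Gamma_ofReal, ← Complex.Gamma_ofReal] at *
    push_cast at hG ⊢
    rw [hG]
  have := Complex.ofReal_inj.mp this
  field_simp
  linarith [this]

lemma wInt {ν : ℝ} (hν : 0 < ν) :
    IntervalIntegrable (fun x => (1 - x ^ 2) ^ (ν - 1)) volume (-1) 1 := by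
  have g01 : IntervalIntegrable (fun x => (1 - x ^ 2) ^ (ν - 1)) volume 0 1 := by
    have base : IntervalIntegrable (fun x : ℝ => (1 - x) ^ (ν - 1)) volume 0 1 := by
      have := (intervalIntegral.intervalIntegrable_rpow' (a := 0) (b := 1) (r := ν - 1)
        (by linarith)).comp_sub_left 1
      norm_num at this
      exact this.symm
    have prod : IntervalIntegrable (fun x : ℝ => (1 - x) ^ (ν - 1) * (1 + x) ^ (ν - 1))
        volume 0 1 := by
      apply IntervalIntegrable.mul_continuousOn base
      apply ContinuousOn.rpow_const (by fun_prop)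
      intro x hx
      rw [Set.uIcc_of_le (by norm_num)] at hx
      left
      have := hx.1
      intro h
      nlinarith
    rw [intervalIntegrable_iff_integrableOn_Ioc_of_le (by norm_num)] at prod ⊢
    apply prod.congr_fun ?_ measurableSet_Ioc
    intro x hx
    have h1 : (0:ℝ) ≤ 1 - x := by linarith [hx.2]
    have h2 : (0:ℝ) ≤ 1 + x := by linarith [hx.1]
    show (1 - x) ^ (ν - 1) * (1 + x) ^ (ν - 1) = (1 - x ^ 2) ^ (ν - 1)
    rw [← Real.mul_rpow h1 h2]
    congr 1
    ring
  have gneg : IntervalIntegrable (fun x => (1 - x ^ 2) ^ (ν - 1)) volume (-1) 0 := by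
    have := g01.comp_sub_left 0
    norm_num at this
    exact (by simpa using this : IntervalIntegrable _ volume 0 (-1)).symm
  exact gneg.trans g01

lemma momInt {ν : ℝ} (hν : 0 < ν) (n : ℕ) :
    IntervalIntegrable (fun x => x ^ n * (1 - x ^ 2) ^ (ν - 1)) volume (-1) 1 := by
  apply IntervalIntegrable.continuousOn_mul (wInt hν)
  fun_prop

lemma oddZero (ν : ℝ) (k : ℕ) :
    ∫ x in (-1:ℝ)..1, x ^ (2 * k + 1) * (1 - x ^ 2) ^ (ν - 1) = 0 := by
  set f : ℝ → ℝ := fun x => x ^ (2 * k + 1) * (1 - x ^ 2) ^ (ν - 1) with hf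
  have h1 : ∫ x in (-1:ℝ)..1, f (-x) = ∫ x in (-1:ℝ)..1, f x := by
    simpa using intervalIntegral.integral_comp_neg (a := -1) (b := 1) f
  have h2 : ∀ x, f (-x) = - f x := by
    intro x
    simp only [hf]
    rw [Odd.neg_pow ⟨k, by ring⟩, neg_sq]
    ring
  simp_rw [h2, intervalIntegral.integral_neg] at h1
  linarith

lemma evenVal {ν : ℝ} (hν : 0 < ν) (k : ℕ) :
    ∫ x in (-1:ℝ)..1, x ^ (2 * k) * (1 - x ^ 2) ^ (ν - 1)
      = Real.Gamma ((k:ℝ) + 1/2) * Real.Gamma ν / Real.Gamma (ν + k + 1/2) := by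
  set f : ℝ → ℝ := fun x => x ^ (2 * k) * (1 - x ^ 2) ^ (ν - 1) with hf
  have hsub1 : Set.uIcc (-1:ℝ) 0 ⊆ Set.uIcc (-1:ℝ) 1 := by
    rw [Set.uIcc_of_le (by norm_num), Set.uIcc_of_le (by norm_num)]
    exact Set.Icc_subset_Icc le_rfl (by norm_num)
  have hsub2 : Set.uIcc (0:ℝ) 1 ⊆ Set.uIcc (-1:ℝ) 1 := by
    rw [Set.uIcc_of_le (by norm_num), Set.uIcc_of_le (by norm_num)]
    exact Set.Icc_subset_Icc (by norm_num) le_rfl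
  have hsym : ∫ x in (-1:ℝ)..1, f x = 2 * ∫ x in (0:ℝ)..1, f x := by
    have h1 : ∫ x in (-1:ℝ)..0, f x = ∫ x in (0:ℝ)..1, f x := by
      have := intervalIntegral.integral_comp_neg (a := 0) (b := 1) f
      simp only [neg_zero, neg_neg] at this
      rw [← this]
      apply intervalIntegral.integral_congr
      intro x _
      simp only [hf, Even.neg_pow (even_two_mul k), neg_sq]
    rw [← intervalIntegral.integral_add_adjacent_intervals
      ((momInt hν (2*k)).mono_set hsub1) ((momInt hν (2*k)).mono_set hsub2), h1]
    ring
  have him : (fun x : ℝ => x ^ 2) '' Set.Ioo 0 1 = Set.Ioo (0:ℝ) 1 := by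
    ext t
    constructor
    · rintro ⟨x, hx, rfl⟩
      simp only
      exact ⟨pow_pos hx.1 2, by nlinarith [hx.1, hx.2]⟩
    · rintro ht
      exact ⟨Real.sqrt t, ⟨Real.sqrt_pos.mpr ht.1,
        by rw [show (1:ℝ) = Real.sqrt 1 by simp]; exact Real.sqrt_lt_sqrt ht.1.le ht.2⟩,
        Real.sq_sqrt ht.1.le⟩
  have hderiv : ∀ x ∈ Set.Ioo (0:ℝ) 1, HasDerivWithinAt (fun x : ℝ => x ^ 2) (2 * x)
      (Set.Ioo 0 1) x := by
    intro x _
    simpa using (hasDerivAt_pow 2 x).hasDerivWithinAt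
  have hinj : Set.InjOn (fun x : ℝ => x ^ 2) (Set.Ioo 0 1) := by
    intro x hx y hy h
    simp only at h
    nlinarith [hx.1, hy.1]
  set g : ℝ → ℝ := fun t => t ^ ((k:ℝ) + 1/2 - 1) * (1 - t) ^ (ν - 1) with hg
  have hcv := MeasureTheory.integral_image_eq_integral_abs_deriv_smul
    measurableSet_Ioo hderiv hinj g
  rw [him] at hcv
  have hsimp : ∫ x in Set.Ioo (0:ℝ) 1, |2 * x| • g (x ^ 2)
      = ∫ x in Set.Ioo (0:ℝ) 1, 2 * f x := by
    apply MeasureTheory.setIntegral_congr_fun measurableSet_Ioo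
    intro x hx
    have hx0 : (0:ℝ) < x := hx.1
    simp only [hg, hf, smul_eq_mul]
    rw [abs_of_pos (by linarith)]
    rw [show (x ^ 2 : ℝ) = x ^ (2:ℝ) by rw [← Real.rpow_natCast x 2]; norm_num,
      ← Real.rpow_natCast x (2*k)]
    rw [← Real.rpow_mul hx0.le]
    rw [show (2:ℝ) * ((k:ℝ) + 1/2 - 1) = 2*(k:ℝ) - 1 by ring]
    have key : (2:ℝ) * x * x ^ ((2:ℝ)*(k:ℝ) - 1) = 2 * x ^ ((2:ℝ)*(k:ℝ)) := by
      rw [show ((2:ℝ)*(k:ℝ)) = 1 + (2*(k:ℝ) - 1) by ring, Real.rpow_add hx0, Real.rpow_one]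
      ring
    have hxx : x ^ (2:ℝ) = x^(2:ℕ) := by rw [← Real.rpow_natCast x 2]; norm_num
    rw [hxx]
    push_cast
    linear_combination (1 - x^(2:ℕ))^(ν-1) * key
  have hbeta := betaVal (a := (k:ℝ) + 1/2) (b := ν) (by positivity) hν
  have hgI : ∫ t in Set.Ioo (0:ℝ) 1, g t
      = Real.Gamma ((k:ℝ)+1/2) * Real.Gamma ν / Real.Gamma ((k:ℝ)+1/2+ν) := by
    rw [← MeasureTheory.integral_Ioc_eq_integral_Ioo,
      ← intervalIntegral.integral_of_le (by norm_num)]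
    exact hbeta
  have h2f : ∫ x in Set.Ioo (0:ℝ) 1, 2 * f x = 2 * ∫ x in Set.Ioo (0:ℝ) 1, f x :=
    MeasureTheory.integral_const_mul 2 f
  have hIoo : ∫ x in (0:ℝ)..1, f x = ∫ x in Set.Ioo (0:ℝ) 1, f x := by
    rw [intervalIntegral.integral_of_le (by norm_num),
      MeasureTheory.integral_Ioc_eq_integral_Ioo]
  rw [hsym, hIoo, ← h2f, ← hsimp, ← hcv, hgI,
    show (k:ℝ)+1/2+ν = ν + k + 1/2 by ring]

end PoissonAux

theorem stmt0 (ν μ : ℝ) (hν : 1 / 2 < ν) (hμ : 0 < μ) :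
    (∫ x in (-1 : ℝ)..1, Complex.exp (μ * x * Complex.I) * ((1 - x ^ 2) ^ (ν - 1) : ℝ)) =
      ((Real.sqrt Real.pi * Real.Gamma ν * (2 / μ) ^ (ν - 1 / 2) *
        besselJ (ν - 1 / 2) μ : ℝ) : ℂ) := by
  have hν0 : (0:ℝ) < ν := by linarith
  set w : ℝ → ℝ := fun x => (1 - x ^ 2) ^ (ν - 1) with hw
  set c : ℕ → ℝ := fun n => ∫ x in (-1:ℝ)..1, x ^ n * w x with hc
  set F : ℕ → ℝ → ℂ := fun n x =>
    ((μ:ℂ) * x * Complex.I) ^ n / n.factorial * ((w x : ℝ) : ℂ) with hF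
  -- Step 1: integrand as a series
  have hexp : ∀ x : ℝ, Complex.exp ((μ:ℂ) * x * Complex.I) * ((w x : ℝ) : ℂ)
      = ∑' n, F n x := by
    intro x
    rw [Complex.exp_eq_exp_ℂ, NormedSpace.exp_eq_tsum_div]
    exact (tsum_mul_right).symm
  -- Step 2: integrability of each term
  have hwInt : IntegrableOn w (Set.Ioc (-1:ℝ) 1) volume :=
    (intervalIntegrable_iff_integrableOn_Ioc_of_le (by norm_num)).mp (wInt hν0)
  have hmom : ∀ n, IntegrableOn (fun x : ℝ => x ^ n * w x) (Set.Ioc (-1:ℝ) 1) volume :=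
    fun n => (intervalIntegrable_iff_integrableOn_Ioc_of_le (by norm_num)).mp (momInt hν0 n)
  have hInt : ∀ n, Integrable (F n) (volume.restrict (Set.Ioc (-1:ℝ) 1)) := by
    intro n
    have h2 := (((hmom n).ofReal (𝕜 := ℂ))).const_mul (((μ:ℂ) * Complex.I) ^ n / n.factorial)
    exact h2.congr (Filter.Eventually.of_forall fun x => by
      simp only [hF]
      push_cast
      ring_nf
      rfl)
  -- Step 3: summability of integrals of norms
  have hwnn : ∀ x ∈ Set.Ioc (-1:ℝ) 1, 0 ≤ w x := by
    intro x hx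
    exact Real.rpow_nonneg (by nlinarith [hx.1, hx.2]) _
  have hnormle : ∀ n, (∫ x in Set.Ioc (-1:ℝ) 1, ‖F n x‖)
      ≤ μ ^ n / n.factorial * ∫ x in Set.Ioc (-1:ℝ) 1, w x := by
    intro n
    rw [← MeasureTheory.integral_const_mul]
    apply MeasureTheory.setIntegral_mono_on (hInt n).norm
      ((hwInt.const_mul _)) measurableSet_Ioc
    intro x hx
    have hx1 : |x| ≤ 1 := abs_le.mpr ⟨hx.1.le, hx.2⟩
    simp only [hF, norm_mul, norm_div, norm_pow, Complex.norm_real, Complex.norm_I,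
      mul_one, Real.norm_eq_abs, Complex.norm_natCast, _root_.abs_of_pos hμ,
      _root_.abs_of_nonneg (hwnn x hx)]
    have hfac : (0:ℝ) < n.factorial := by positivity
    apply mul_le_mul_of_nonneg_right _ (hwnn x hx)
    gcongr
    nlinarith [abs_nonneg x]
  have hnn : ∀ n, 0 ≤ ∫ x in Set.Ioc (-1:ℝ) 1, ‖F n x‖ :=
    fun n => integral_nonneg fun x => norm_nonneg _
  have hsum : Summable fun n => ∫ x in Set.Ioc (-1:ℝ) 1, ‖F n x‖ :=
    Summable.of_nonneg_of_le hnn hnormle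
      ((Real.summable_pow_div_factorial μ).mul_right _)
  have hswap := MeasureTheory.integral_tsum_of_summable_integral_norm hInt hsum
  have hLHS : (∫ x in (-1:ℝ)..1, Complex.exp ((μ:ℂ)*x*Complex.I) * ((w x : ℝ):ℂ))
      = ∑' n, ∫ x in Set.Ioc (-1:ℝ) 1, F n x := by
    rw [intervalIntegral.integral_of_le (by norm_num), hswap]
    exact integral_congr_ae (Filter.Eventually.of_forall fun x => hexp x)
  have hFn : ∀ n, (∫ x in Set.Ioc (-1:ℝ) 1, F n x)
      = ((μ:ℂ)*Complex.I)^n / n.factorial * ((c n : ℝ) : ℂ) := by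
    intro n
    have heq : ∀ x : ℝ, F n x
        = ((μ:ℂ)*Complex.I)^n / n.factorial * ((x^n * w x : ℝ) : ℂ) := by
      intro x; simp only [hF]; push_cast; ring
    simp_rw [heq]
    rw [MeasureTheory.integral_const_mul]
    congr 1
    rw [show (∫ x in Set.Ioc (-1:ℝ) 1, ((x^n * w x : ℝ) : ℂ))
        = ((∫ x in Set.Ioc (-1:ℝ) 1, x^n * w x : ℝ) : ℂ) from _root_.integral_ofReal]
    congr 1
    exact (intervalIntegral.integral_of_le (by norm_num)).symm
  set h : ℕ → ℂ := fun n => ((μ:ℂ)*Complex.I)^n / n.factorial * ((c n : ℝ) : ℂ) with hh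
  have hoddh : ∀ k, h (2*k+1) = 0 := by
    intro k
    have hz : c (2*k+1) = 0 := oddZero ν k
    simp [hh, hz]
  have hre : ∑' k : ℕ, h (2*k) = ∑' n, h n := by
    apply Function.Injective.tsum_eq
      (fun a b hab => by simp only at hab; omega : Function.Injective (fun k : ℕ => 2 * k))
    intro n hn
    rcases Nat.even_or_odd n with ⟨k, hk⟩ | ⟨k, hk⟩
    · exact ⟨k, by simp only; omega⟩
    · exact absurd (hk ▸ hoddh k) hn
  set r : ℕ → ℝ := fun k => (-1:ℝ)^k * μ^(2*k) / (4^k * k.factorial) *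
      (Real.sqrt π * Real.Gamma ν / Real.Gamma (ν + k + 1/2)) with hr
  have hterm : ∀ k : ℕ, h (2*k) = ((r k : ℝ) : ℂ) := by
    intro k
    have hc2 : c (2*k) = Real.Gamma ((k:ℝ)+1/2) * Real.Gamma ν / Real.Gamma (ν+(k:ℝ)+1/2) :=
      evenVal hν0 k
    have hI : ((μ:ℂ)*Complex.I)^(2*k) = ((((-1:ℝ)^k * μ^(2*k) : ℝ)) : ℂ) := by
      rw [pow_mul]
      have h2 : ((μ:ℂ)*Complex.I)^2 = ((-(μ^2) : ℝ) : ℂ) := by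
        rw [mul_pow, Complex.I_sq]; push_cast; ring
      rw [h2, ← Complex.ofReal_pow]
      congr 1
      rw [neg_pow, ← pow_mul]
    simp only [hh, hr]
    rw [hI, hc2, gamma_nat_add_half k]
    have h2k : ((2*k).factorial : ℝ) ≠ 0 := by positivity
    have hk4 : ((4:ℝ)^k * (k.factorial : ℝ)) ≠ 0 := by positivity
    have hreal : (-1:ℝ)^k * μ^(2*k) / (2*k).factorial *
        ((2*k).factorial * Real.sqrt π / (4^k * k.factorial) * Real.Gamma ν
          / Real.Gamma (ν+(k:ℝ)+1/2))
        = (-1:ℝ)^k * μ^(2*k) / (4^k * k.factorial) *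
          (Real.sqrt π * Real.Gamma ν / Real.Gamma (ν + (k:ℝ) + 1/2)) := by
      field_simp
    rw [← hreal]
    push_cast
    ring
  -- put everything together
  rw [hLHS]
  simp_rw [hFn]
  rw [show (∑' n, ((μ:ℂ)*Complex.I)^n / (n.factorial : ℂ) * ((c n : ℝ) : ℂ)) = ∑' n, h n
    from rfl, ← hre]
  simp_rw [hterm]
  rw [← Complex.ofReal_tsum]
  congr 1
  -- now a real identity
  rw [besselJ, ← tsum_mul_left]
  apply tsum_congr
  intro k
  have hμ2 : (0:ℝ) < μ/2 := by linarith
  have hG : Real.Gamma (ν - 1/2 + (k:ℝ) + 1) = Real.Gamma (ν + (k:ℝ) + 1/2) := by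
    congr 1; ring
  have hGpos : (0:ℝ) < Real.Gamma (ν + (k:ℝ) + 1/2) :=
    Real.Gamma_pos_of_pos (by positivity)
  rw [hG]
  rw [show ν - 1/2 + 2*(k:ℝ) = (ν - 1/2) + ((2*k : ℕ) : ℝ) by push_cast; ring,
    Real.rpow_add hμ2, Real.rpow_natCast]
  have hone : (2/μ) ^ (ν-1/2) * (μ/2) ^ (ν-1/2) = 1 := by
    rw [← Real.mul_rpow (by positivity) (by positivity),
      show (2/μ) * (μ/2) = 1 by field_simp]
    exact Real.one_rpow _
  have h2 : ((μ/2) ^ (2*k) : ℝ) = μ^(2*k) / 4^k := by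
    rw [div_pow]
    congr 1
    rw [pow_mul]
    norm_num
  rw [h2, hr]
  simp only
  linear_combination (- Real.sqrt π * Real.Gamma ν * (-1:ℝ)^k * μ^(2*k)
    / (4^k * k.factorial * Real.Gamma (ν+(k:ℝ)+1/2))) * hone
end

section
/- For μ + ν > -1, α > 0 and β > 0, ∫_0^∞ x^μ e^{-αx²} J_ν(βx) dx = (β^ν Γ((μ+ν+1)/2)) / (2^{ν+1} α^{(μ+ν+1)/2} Γ(ν+1)) · ₁F₁((μ+ν+1)/2; ν+1; -β²/(4α)). -/
open MeasureTheory Real Complex Finset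
open scoped RealInnerProductSpace

lemma poch_pos {a : ℝ} (ha : 0 < a) (k : ℕ) : 0 < poch a k :=
  Finset.prod_pos fun i _ => by positivity

lemma Gamma_poch (a : ℝ) (ha : 0 < a) : ∀ k : ℕ, Real.Gamma (a + k) = poch a k * Real.Gamma a
  | 0 => by simp [poch]
  | (k+1) => by
    have h1 : a + ((k+1 : ℕ) : ℝ) = (a + k) + 1 := by push_cast; ring
    have h2 : (a : ℝ) + k ≠ 0 := by positivity
    rw [h1, Real.Gamma_add_one h2, Gamma_poch a ha k]
    simp only [poch, Finset.prod_range_succ]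
    ring

lemma gauss_moment {b q : ℝ} (hb : 0 < b) (hq : -1 < q) :
    ∫ x in Set.Ioi (0:ℝ), x ^ q * Real.exp (-b * x ^ 2) =
      b ^ (-(q+1)/2) * (1/2) * Real.Gamma ((q+1)/2) := by
  simp_rw [← Real.rpow_two]
  exact integral_rpow_mul_exp_neg_mul_rpow two_pos hq hb

theorem stmt5 (μ ν α β : ℝ) (h : -1 < μ + ν) (hα : 0 < α) (hβ : 0 < β) (hν : 0 ≤ ν) :
    (∫ x in Set.Ioi (0 : ℝ), x ^ μ * Real.exp (-α * x ^ 2) * besselJ ν (β * x)) =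
      β ^ ν * Real.Gamma ((μ + ν + 1) / 2) /
        (2 ^ (ν + 1) * α ^ ((μ + ν + 1) / 2) * Real.Gamma (ν + 1)) *
        hyp1F1 ((μ + ν + 1) / 2) (ν + 1) (-β ^ 2 / (4 * α)) := by
  set s : ℝ := (μ + ν + 1) / 2 with hs_def
  have hs : 0 < s := by rw [hs_def]; linarith
  set t : ℝ := β ^ 2 / (4 * α) with ht_def
  have ht : 0 < t := by rw [ht_def]; positivity
  -- the summands
  set c : ℕ → ℝ := fun k => (-1 : ℝ) ^ k / (k.factorial * Real.Gamma (ν + k + 1)) with hc_def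
  set F : ℕ → ℝ → ℝ := fun k x =>
    x ^ μ * Real.exp (-α * x ^ 2) * (c k * (β * x / 2) ^ (ν + 2 * (k : ℝ))) with hF_def
  have hq : ∀ k : ℕ, (-1 : ℝ) < μ + ν + 2 * k := fun k => by
    have : (0:ℝ) ≤ 2 * k := by positivity
    linarith
  have hΓν : ∀ k : ℕ, 0 < Real.Gamma (ν + k + 1) :=
    fun k => Real.Gamma_pos_of_pos (by positivity)
  have hck : ∀ k : ℕ, |c k| = 1 / (k.factorial * Real.Gamma (ν + k + 1)) := by
    intro k
    rw [hc_def]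
    have h1 : |((-1:ℝ)) ^ k| = 1 := by simp
    rw [abs_div, h1,
      abs_of_pos (by positivity : (0:ℝ) < (k.factorial : ℝ) * Real.Gamma (ν + k + 1))]
  -- pointwise rearrangement on Ioi 0
  have hpt : ∀ (d : ℝ) (k : ℕ) ⦃x : ℝ⦄, x ∈ Set.Ioi (0:ℝ) →
      x ^ μ * Real.exp (-α * x ^ 2) * (d * (β * x / 2) ^ (ν + 2 * (k : ℝ))) =
      (d * (β / 2) ^ (ν + 2 * (k : ℝ))) *
        (x ^ (μ + ν + 2 * (k : ℝ)) * Real.exp (-α * x ^ 2)) := by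
    intro d k x hx
    have hx' : 0 < x := hx
    rw [show β * x / 2 = (β / 2) * x by ring,
      Real.mul_rpow (by positivity) hx'.le,
      show μ + ν + 2 * (k:ℝ) = μ + (ν + 2 * (k:ℝ)) by ring,
      Real.rpow_add hx' μ (ν + 2 * (k:ℝ))]
    ring
  -- value of each integral
  have key : ∀ (d : ℝ) (k : ℕ),
      ∫ x in Set.Ioi (0:ℝ), x ^ μ * Real.exp (-α * x ^ 2) * (d * (β * x / 2) ^ (ν + 2 * (k : ℝ)))
      = (d * (β / 2) ^ (ν + 2 * (k : ℝ))) * (α ^ (-(s + k)) * (1/2) * Real.Gamma (s + k)) := by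
    intro d k
    rw [setIntegral_congr_fun measurableSet_Ioi (hpt d k), integral_const_mul,
      gauss_moment hα (hq k)]
    have e1 : (μ + ν + 2 * (k:ℝ) + 1) / 2 = s + k := by rw [hs_def]; ring
    rw [e1, show -(μ + ν + 2 * (k:ℝ) + 1) / 2 = -(s + k) by rw [hs_def]; ring]
  -- power expansion lemmas
  have epow : ∀ k : ℕ, (β/2 : ℝ) ^ (ν + 2*(k:ℝ)) = (β/2)^ν * ((β/2)^2)^k := by
    intro k
    rw [Real.rpow_add (by positivity), show (2*(k:ℝ)) = ((2*k : ℕ) : ℝ) by push_cast; ring,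
      Real.rpow_natCast, pow_mul]
  have eα : ∀ k : ℕ, (α : ℝ) ^ (-(s + (k:ℝ))) = α ^ (-s) * (α⁻¹)^k := by
    intro k
    rw [show -(s + (k:ℝ)) = -s + (-(k:ℝ)) by ring, Real.rpow_add hα,
      Real.rpow_neg hα.le (k:ℝ), Real.rpow_natCast, ← inv_pow]
  -- integrability
  have hInt : ∀ k : ℕ, IntegrableOn (F k) (Set.Ioi (0:ℝ)) := by
    intro k
    have base : IntegrableOn
        (fun x : ℝ => c k * (β / 2) ^ (ν + 2 * (k:ℝ)) * (x ^ (μ + ν + 2 * (k:ℝ)) * Real.exp (-α * x ^ 2)))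
        (Set.Ioi (0:ℝ)) :=
      (integrableOn_rpow_mul_exp_neg_mul_sq hα (hq k)).const_mul _
    refine IntegrableOn.congr_fun base (fun x hx => ?_) measurableSet_Ioi
    simp only [hF_def]
    exact (hpt (c k) k hx).symm
  -- norm of integrals
  have hnormval : ∀ k : ℕ, ∫ x in Set.Ioi (0:ℝ), ‖F k x‖ =
      (|c k| * (β/2) ^ (ν + 2*(k:ℝ))) * (α ^ (-(s+(k:ℝ))) * (1/2) * Real.Gamma (s+k)) := by
    intro k
    rw [← key |c k| k]
    refine setIntegral_congr_fun measurableSet_Ioi (fun x hx => ?_)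
    have hx' : (0:ℝ) < x := hx
    simp only [hF_def, Real.norm_eq_abs, abs_mul, Real.abs_exp,
      _root_.abs_of_nonneg (Real.rpow_nonneg hx'.le μ),
      _root_.abs_of_nonneg (Real.rpow_nonneg (by positivity : (0:ℝ) ≤ β*x/2) (ν + 2*(k:ℝ)))]
  -- the dominating series
  set G : ℕ → ℝ := fun k => Real.Gamma (s + k) / (k.factorial * Real.Gamma (ν + k + 1)) * t ^ k
    with hG_def
  have hGpos : ∀ k, 0 < G k := by
    intro k
    have h1 := hΓν k
    have h2 : 0 < Real.Gamma (s + k) := Real.Gamma_pos_of_pos (by positivity)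
    simp only [hG_def]
    positivity
  have hrec : ∀ k : ℕ, G (k+1) = ((s + k) * t / (((k:ℝ)+1) * (ν + k + 1))) * G k := by
    intro k
    have hsk : (0:ℝ) < s + k := by positivity
    have hνk : (0:ℝ) < ν + k + 1 := by positivity
    have hkf : ((k.factorial : ℝ)) ≠ 0 := Nat.cast_ne_zero.mpr k.factorial_ne_zero
    simp only [hG_def]
    push_cast [Nat.factorial_succ]
    rw [show s + ((k:ℝ)+1) = (s + (k:ℝ)) + 1 by ring, Real.Gamma_add_one hsk.ne',
      show ν + ((k:ℝ)+1) + 1 = (ν + (k:ℝ) + 1) + 1 by ring, Real.Gamma_add_one hνk.ne']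
    field_simp
    ring
  have hGsum : Summable G := by
    refine summable_of_ratio_norm_eventually_le (r := 1/2) (by norm_num) ?_
    have hN : ∀ᶠ n : ℕ in Filter.atTop, max s (4*t) ≤ (n:ℝ) := by
      filter_upwards [Filter.eventually_ge_atTop ⌈max s (4*t)⌉₊] with n hn
      exact le_trans (Nat.le_ceil _) (by exact_mod_cast hn)
    filter_upwards [hN] with n hn
    have hsn : s ≤ (n:ℝ) := le_trans (le_max_left _ _) hn
    have htn : 4*t ≤ (n:ℝ) := le_trans (le_max_right _ _) hn
    have hn0 : (0:ℝ) ≤ (n:ℝ) := Nat.cast_nonneg n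
    rw [Real.norm_eq_abs, Real.norm_eq_abs, abs_of_pos (hGpos _), abs_of_pos (hGpos _), hrec n]
    have hfac : (s + n) * t / (((n:ℝ)+1) * (ν + n + 1)) ≤ 1/2 := by
      rw [div_le_iff₀ (by positivity)]
      nlinarith [mul_le_mul_of_nonneg_right hsn ht.le,
        mul_le_mul_of_nonneg_left htn hn0, mul_nonneg hn0 hν]
    exact mul_le_mul_of_nonneg_right hfac (hGpos n).le
  -- t as a product
  have et : t = (β/2)^2 * α⁻¹ := by rw [ht_def]; field_simp [hα.ne']; ring
  -- summability of integral norms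
  have hSum : Summable (fun k => ∫ x in Set.Ioi (0:ℝ), ‖F k x‖) := by
    have heq : (fun k => ∫ x in Set.Ioi (0:ℝ), ‖F k x‖)
        = fun k => ((β/2)^ν * (α^(-s) * (1/2))) * G k := by
      funext k
      rw [hnormval k, hck k, epow k, eα k]
      simp only [hG_def]
      rw [et, mul_pow]
      ring
    rw [heq]
    exact hGsum.mul_left _
  -- final termwise identity
  have efin : ∀ k : ℕ, (c k * (β/2)^(ν+2*(k:ℝ))) * (α^(-(s+(k:ℝ))) * (1/2) * Real.Gamma (s+(k:ℝ)))
      = (β ^ ν * Real.Gamma s / (2 ^ (ν+1) * α ^ s * Real.Gamma (ν+1))) *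
        (poch s k / poch (ν+1) k * (-β^2/(4*α))^k / k.factorial) := by
    intro k
    have hΓ1 : Real.Gamma (s + k) = poch s k * Real.Gamma s := Gamma_poch s hs k
    have hΓ2 : Real.Gamma (ν + k + 1) = poch (ν+1) k * Real.Gamma (ν+1) := by
      rw [show ν + (k:ℝ) + 1 = (ν+1) + (k:ℕ) by push_cast; ring]
      exact Gamma_poch (ν+1) (by linarith) k
    have ez : (-β^2/(4*α)) = -((β/2)^2 * α⁻¹) := by field_simp [hα.ne']; ring
    have e2 : (2:ℝ)^(ν+1) = 2^ν * 2 := by rw [Real.rpow_add two_pos, Real.rpow_one]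
    have eβ : β ^ ν = (β/2)^ν * 2^ν := by
      rw [← Real.mul_rpow (by positivity) (by positivity)]
      norm_num
    have hkf : ((k.factorial : ℝ)) ≠ 0 := Nat.cast_ne_zero.mpr k.factorial_ne_zero
    have hΓν1 : Real.Gamma (ν+1) ≠ 0 := (Real.Gamma_pos_of_pos (by linarith)).ne'
    have hpoch : poch (ν+1) k ≠ 0 := (poch_pos (by linarith) k).ne'
    have hαs : (α:ℝ) ^ s ≠ 0 := (Real.rpow_pos_of_pos hα s).ne'
    have h2ν : (2:ℝ) ^ ν ≠ 0 := (Real.rpow_pos_of_pos two_pos ν).ne'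
    have hβν : (β/2:ℝ) ^ ν ≠ 0 := (Real.rpow_pos_of_pos (by positivity) ν).ne'
    have ezk : (-β^2/(4*α))^k = (-1:ℝ)^k * (((β/2)^2)^k * (α⁻¹)^k) := by
      rw [ez, neg_eq_neg_one_mul, mul_pow, mul_pow]
    simp only [hc_def]
    rw [hΓ2, hΓ1, epow k, eα k, ezk, e2, eβ, Real.rpow_neg hα.le]
    field_simp
  -- assemble
  calc (∫ x in Set.Ioi (0:ℝ), x ^ μ * Real.exp (-α * x ^ 2) * besselJ ν (β * x))
      = ∫ x in Set.Ioi (0:ℝ), ∑' k, F k x := by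
        refine setIntegral_congr_fun measurableSet_Ioi (fun x hx => ?_)
        simp only [hF_def, besselJ, hc_def]
        exact (tsum_mul_left).symm
    _ = ∑' k, ∫ x in Set.Ioi (0:ℝ), F k x :=
        (integral_tsum_of_summable_integral_norm hInt hSum).symm
    _ = β ^ ν * Real.Gamma s / (2 ^ (ν + 1) * α ^ s * Real.Gamma (ν + 1)) *
        hyp1F1 s (ν + 1) (-β ^ 2 / (4 * α)) := by
        rw [hyp1F1, ← tsum_mul_left]
        refine tsum_congr (fun k => ?_)
        simp only [hF_def]
        rw [key (c k) k]
        exact efin k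
end

section
/- Let Y have density f(y) = 2 g(‖y‖²) π(y) on ℝⁿ, where g(‖y‖²) is a spherically symmetric probability density with characteristic function ψ(‖t‖²) > 0 and π is a measurable skewing function with 0 ≤ π(y) ≤ 1 and π(-y) + π(y) = 1. Then the characteristic function of Y equals c(t) = 2 ψ(‖t‖²) k(t) where k(t) = (1/ψ(‖t‖²)) ∫_{ℝⁿ} e^{i⟨t,y⟩} g(‖y‖²) π(y) dy, and k satisfies k(t) + k(-t) = 1 for all t ∈ ℝⁿ. -/
open MeasureTheory Real Complex Finset
open scoped RealInnerProductSpace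

theorem stmt13 {n : ℕ} (g : ℝ → ℝ) (hg0 : ∀ u, 0 ≤ u → 0 ≤ g u)
    (hgmeas : Measurable g)
    (hgi : Integrable (fun x : EuclideanSpace ℝ (Fin n) => g (‖x‖ ^ 2)))
    (hgdens : (∫ x : EuclideanSpace ℝ (Fin n), g (‖x‖ ^ 2)) = 1)
    (ψ : ℝ → ℝ)
    (hψ : ∀ t : EuclideanSpace ℝ (Fin n),
      (∫ x : EuclideanSpace ℝ (Fin n), Complex.exp ((⟪t, x⟫ : ℝ) * Complex.I) * (g (‖x‖ ^ 2) : ℂ)) =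
        ((ψ (‖t‖ ^ 2) : ℝ) : ℂ))
    (hψpos : ∀ t : EuclideanSpace ℝ (Fin n), 0 < ψ (‖t‖ ^ 2))
    (πs : EuclideanSpace ℝ (Fin n) → ℝ) (hπmeas : Measurable πs)
    (hπ01 : ∀ y, 0 ≤ πs y ∧ πs y ≤ 1) (hπskew : ∀ y, πs (-y) + πs y = 1)
    (k : EuclideanSpace ℝ (Fin n) → ℂ)
    (hk : ∀ t, k t = (1 / (ψ (‖t‖ ^ 2) : ℂ)) *
      ∫ y : EuclideanSpace ℝ (Fin n),
        Complex.exp ((⟪t, y⟫ : ℝ) * Complex.I) * (g (‖y‖ ^ 2) : ℂ) * (πs y : ℂ))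
    (t : EuclideanSpace ℝ (Fin n)) :
    (∫ y : EuclideanSpace ℝ (Fin n),
        Complex.exp ((⟪t, y⟫ : ℝ) * Complex.I) * ((2 * g (‖y‖ ^ 2) * πs y : ℝ) : ℂ)) =
      2 * ((ψ (‖t‖ ^ 2) : ℝ) : ℂ) * k t ∧ k t + k (-t) = 1 := by
  classical
  have hψne : ((ψ (‖t‖ ^ 2) : ℝ) : ℂ) ≠ 0 := by
    exact_mod_cast (hψpos t).ne'
  -- measurability of the base integrand
  have hcont : Continuous fun y : EuclideanSpace ℝ (Fin n) => Complex.exp ((⟪t, y⟫ : ℝ) * Complex.I) := by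
    exact Complex.continuous_exp.comp ((Complex.continuous_ofReal.comp
      (continuous_const.inner continuous_id)).mul continuous_const)
  have hgm : Measurable fun y : EuclideanSpace ℝ (Fin n) => (g (‖y‖ ^ 2) : ℂ) :=
    Complex.measurable_ofReal.comp (hgmeas.comp (measurable_norm.pow_const 2))
  have hFmeas : AEStronglyMeasurable
      (fun y : EuclideanSpace ℝ (Fin n) => Complex.exp ((⟪t, y⟫ : ℝ) * Complex.I) * (g (‖y‖ ^ 2) : ℂ)) volume :=
    (hcont.aestronglyMeasurable.mul hgm.aestronglyMeasurable)
  -- integrability of F * π-type integrands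
  have key : ∀ p : EuclideanSpace ℝ (Fin n) → ℝ, Measurable p → (∀ y, 0 ≤ p y ∧ p y ≤ 1) →
      Integrable (fun y : EuclideanSpace ℝ (Fin n) => Complex.exp ((⟪t, y⟫ : ℝ) * Complex.I) *
        (g (‖y‖ ^ 2) : ℂ) * (p y : ℂ)) := by
    intro p hpm hp01
    refine Integrable.mono' hgi (hFmeas.mul (Complex.measurable_ofReal.comp hpm).aestronglyMeasurable) ?_
    filter_upwards with y
    have hg' : 0 ≤ g (‖y‖ ^ 2) := hg0 _ (by positivity)
    have h1 : ‖Complex.exp ((⟪t, y⟫ : ℝ) * Complex.I)‖ = 1 := by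
      simpa using Complex.abs_exp_ofReal_mul_I (⟪t, y⟫ : ℝ)
    rw [norm_mul, norm_mul, h1, one_mul, Complex.norm_real, Complex.norm_real,
      Real.norm_of_nonneg hg', Real.norm_of_nonneg (hp01 y).1]
    nlinarith [(hp01 y).2]
  have hInt : Integrable (fun y : EuclideanSpace ℝ (Fin n) => Complex.exp ((⟪t, y⟫ : ℝ) * Complex.I) *
      (g (‖y‖ ^ 2) : ℂ) * (πs y : ℂ)) := key πs hπmeas hπ01
  have hInt' : Integrable (fun y : EuclideanSpace ℝ (Fin n) => Complex.exp ((⟪t, y⟫ : ℝ) * Complex.I) *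
      (g (‖y‖ ^ 2) : ℂ) * (πs (-y) : ℂ)) :=
    key (fun y => πs (-y)) (hπmeas.comp measurable_neg) (fun y => hπ01 (-y))
  -- change of variables for k(-t)
  have hneg : (∫ y : EuclideanSpace ℝ (Fin n), Complex.exp ((⟪-t, y⟫ : ℝ) * Complex.I) *
      (g (‖y‖ ^ 2) : ℂ) * (πs y : ℂ)) =
      ∫ y : EuclideanSpace ℝ (Fin n), Complex.exp ((⟪t, y⟫ : ℝ) * Complex.I) *
      (g (‖y‖ ^ 2) : ℂ) * (πs (-y) : ℂ) := by
    rw [← integral_neg_eq_self (fun y : EuclideanSpace ℝ (Fin n) => Complex.exp ((⟪-t, y⟫ : ℝ) * Complex.I) *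
      (g (‖y‖ ^ 2) : ℂ) * (πs y : ℂ)) volume]
    congr 1
    funext y
    simp [inner_neg_neg]
  -- sum of the two integrals
  have hsum : (∫ y : EuclideanSpace ℝ (Fin n), Complex.exp ((⟪t, y⟫ : ℝ) * Complex.I) *
      (g (‖y‖ ^ 2) : ℂ) * (πs y : ℂ)) +
      (∫ y : EuclideanSpace ℝ (Fin n), Complex.exp ((⟪t, y⟫ : ℝ) * Complex.I) *
      (g (‖y‖ ^ 2) : ℂ) * (πs (-y) : ℂ)) = ((ψ (‖t‖ ^ 2) : ℝ) : ℂ) := by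
    rw [← integral_add hInt hInt', ← hψ t]
    congr 1
    funext y
    have h := hπskew y
    have : ((πs y : ℂ)) + ((πs (-y) : ℂ)) = 1 := by
      rw [← Complex.ofReal_add]
      norm_cast
      linarith
    calc Complex.exp ((⟪t, y⟫ : ℝ) * Complex.I) * (g (‖y‖ ^ 2) : ℂ) * (πs y : ℂ) +
        Complex.exp ((⟪t, y⟫ : ℝ) * Complex.I) * (g (‖y‖ ^ 2) : ℂ) * (πs (-y) : ℂ)
        = Complex.exp ((⟪t, y⟫ : ℝ) * Complex.I) * (g (‖y‖ ^ 2) : ℂ) *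
          ((πs y : ℂ) + (πs (-y) : ℂ)) := by ring
      _ = _ := by rw [this, mul_one]
  constructor
  · rw [hk t]
    have : (∫ y : EuclideanSpace ℝ (Fin n), Complex.exp ((⟪t, y⟫ : ℝ) * Complex.I) *
        ((2 * g (‖y‖ ^ 2) * πs y : ℝ) : ℂ)) =
        2 * ∫ y : EuclideanSpace ℝ (Fin n), Complex.exp ((⟪t, y⟫ : ℝ) * Complex.I) *
        (g (‖y‖ ^ 2) : ℂ) * (πs y : ℂ) := by
      rw [← integral_const_mul]
      congr 1
      funext y
      push_cast
      ring
    rw [this]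
    field_simp
    ring_nf
    congr 1
    funext y
    rw [mul_comm Complex.I]
  · rw [hk t, hk (-t)]
    rw [norm_neg, hneg]
    rw [div_mul_eq_mul_div, div_mul_eq_mul_div, one_mul, one_mul, ← add_div,
      hsum, div_self hψne]
end
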